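/- arXiv:2109.02983 — 3 statements merged into one kernel-verified Lean document; each statement's English description precedes it below -/
import Mathlib

section
/- Let ψ, s : [0,T]×ℝ → ℝ be C² solutions of the two-component nonlinear variational wave system: s²(ψ_tt − c(ψ)(c(ψ)ψ_x)_x) + 2s(ψ_t s_t − c(ψ)²ψ_x s_x) + c(ψ)c'(ψ)s_x² = 0 and s_tt − c(ψ)(c(ψ)s_x)_x − c(ψ)c'(ψ)ψ_x s_x − s(ψ_t² − c(ψ)²ψ_x²) + W₀'(s) = 0, with c smooth and positive and W₀ ∈ C¹. Define ℰ = ½(s²(ψ_t² + c(ψ)²ψ_x²) + s_t² + c(ψ)²s_x²) + W₀(s) and ℱ = s²ψ_tψ_x + s_t s_x. Then ∂_t ℰ − ∂_x(c(ψ)²ℱ) = 0. -/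
open Set

lemma mixed_partials (F Ft Fx : ℝ → ℝ → ℝ)
    (hC2 : ContDiff ℝ 2 (fun p : ℝ × ℝ => F p.1 p.2))
    (hFt : ∀ t x, HasDerivAt (fun τ => F τ x) (Ft t x) t)
    (hFx : ∀ t x, HasDerivAt (fun y => F t y) (Fx t x) x)
    (t x : ℝ) :
    ∃ m xx : ℝ, HasDerivAt (fun τ => Fx τ x) m t ∧ HasDerivAt (fun y => Ft t y) m x ∧
      HasDerivAt (fun y => Fx t y) xx x := by
  set G : ℝ × ℝ → ℝ := fun p => F p.1 p.2 with hG
  have hdiff : Differentiable ℝ G := hC2.differentiable (by norm_num)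
  set g : ℝ × ℝ → (ℝ × ℝ →L[ℝ] ℝ) := fderiv ℝ G with hg
  have hgC1 : ContDiff ℝ 1 g := hC2.fderiv_right (by norm_num)
  have hgd : Differentiable ℝ g := hgC1.differentiable one_ne_zero
  have hGp : ∀ p : ℝ × ℝ, HasFDerivAt G (g p) p := fun p => (hdiff p).hasFDerivAt
  have curve1 : ∀ b a : ℝ, HasDerivAt (fun τ : ℝ => ((τ, b) : ℝ × ℝ)) (1, 0) a :=
    fun b a => (hasDerivAt_id a).prodMk (hasDerivAt_const a b)
  have curve2 : ∀ a b : ℝ, HasDerivAt (fun y : ℝ => ((a, y) : ℝ × ℝ)) (0, 1) b :=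
    fun a b => (hasDerivAt_const b a).prodMk (hasDerivAt_id b)
  have hFt_eq : ∀ a b : ℝ, Ft a b = g (a, b) (1, 0) := by
    intro a b
    exact (hFt a b).unique (by have := (hGp (a, b)).comp_hasDerivAt a (curve1 b a); exact this)
  have hFx_eq : ∀ a b : ℝ, Fx a b = g (a, b) (0, 1) := by
    intro a b
    exact (hFx a b).unique ((hGp (a, b)).comp_hasDerivAt b (curve2 a b))
  set g' : ℝ × ℝ →L[ℝ] (ℝ × ℝ →L[ℝ] ℝ) := fderiv ℝ g (t, x) with hg'def
  have hg' : HasFDerivAt g g' (t, x) := (hgd (t, x)).hasFDerivAt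
  have symm : ∀ v w : ℝ × ℝ, g' v w = g' w v :=
    second_derivative_symmetric hGp hg'
  have happ : ∀ v : ℝ × ℝ, HasFDerivAt (fun p => g p v)
      ((ContinuousLinearMap.apply ℝ ℝ v).comp g') (t, x) :=
    fun v => (ContinuousLinearMap.apply ℝ ℝ v).hasFDerivAt.comp (t, x) hg'
  have hDt : ∀ v : ℝ × ℝ, HasDerivAt (fun τ => g (τ, x) v) (g' (1, 0) v) t := by
    intro v
    have := (happ v).comp_hasDerivAt t (curve1 x t)
    simpa [Function.comp_def] using this
  have hDx : ∀ v : ℝ × ℝ, HasDerivAt (fun y => g (t, y) v) (g' (0, 1) v) x := by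
    intro v
    have := (happ v).comp_hasDerivAt x (curve2 t x)
    simpa [Function.comp_def] using this
  refine ⟨g' (1, 0) (0, 1), g' (0, 1) (0, 1), ?_, ?_, ?_⟩
  · have := hDt (0, 1)
    simpa [← hFx_eq] using this
  · have := hDx (1, 0)
    rw [symm (1,0) (0,1)]
    simpa [← hFt_eq] using this
  · have := hDx (0, 1)
    simpa [← hFx_eq] using this


theorem energy_balance_2NVW
    (T : ℝ) (hT : 0 < T)
    (c c' : ℝ → ℝ) (hc : ∀ q, 0 < c q) (hc' : ∀ q, HasDerivAt c (c' q) q)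
    (W₀ W₀' : ℝ → ℝ) (hW₀ : ∀ q, HasDerivAt W₀ (W₀' q) q)
    (ψ s ψt ψx ψtt st sx stt : ℝ → ℝ → ℝ)
    (hψt : ∀ t x, HasDerivAt (fun τ => ψ τ x) (ψt t x) t)
    (hψx : ∀ t x, HasDerivAt (fun y => ψ t y) (ψx t x) x)
    (hψtt : ∀ t x, HasDerivAt (fun τ => ψt τ x) (ψtt t x) t)
    (hst : ∀ t x, HasDerivAt (fun τ => s τ x) (st t x) t)
    (hsx : ∀ t x, HasDerivAt (fun y => s t y) (sx t x) x)
    (hstt : ∀ t x, HasDerivAt (fun τ => st τ x) (stt t x) t)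
    (hC2ψ : ∀ t x, ContDiffAt ℝ 2 (fun p : ℝ × ℝ => ψ p.1 p.2) (t, x))
    (hC2s : ∀ t x, ContDiffAt ℝ 2 (fun p : ℝ × ℝ => s p.1 p.2) (t, x))
    (hPDE1 : ∀ t x, t ∈ Icc 0 T →
      (s t x)^2 * (ψtt t x - c (ψ t x) * deriv (fun y => c (ψ t y) * ψx t y) x)
        + 2 * s t x * (ψt t x * st t x - c (ψ t x)^2 * ψx t x * sx t x)
        + c (ψ t x) * c' (ψ t x) * (sx t x)^2 = 0)
    (hPDE2 : ∀ t x, t ∈ Icc 0 T →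
      stt t x - c (ψ t x) * deriv (fun y => c (ψ t y) * sx t y) x
        - c (ψ t x) * c' (ψ t x) * ψx t x * sx t x
        - s t x * ((ψt t x)^2 - c (ψ t x)^2 * (ψx t x)^2) + W₀' (s t x) = 0)
    (ℰ ℱ : ℝ → ℝ → ℝ)
    (hℰ : ∀ t x, ℰ t x = (1/2) * ((s t x)^2 * ((ψt t x)^2 + c (ψ t x)^2 * (ψx t x)^2)
        + (st t x)^2 + c (ψ t x)^2 * (sx t x)^2) + W₀ (s t x))
    (hℱ : ∀ t x, ℱ t x = (s t x)^2 * ψt t x * ψx t x + st t x * sx t x) :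
    ∀ t x, t ∈ Icc 0 T →
      ∃ Et Fx : ℝ, HasDerivAt (fun τ => ℰ τ x) Et t ∧
        HasDerivAt (fun y => c (ψ t y)^2 * ℱ t y) Fx x ∧ Et - Fx = 0 := by
  intro t x ht
  have hψC2 : ContDiff ℝ 2 (fun p : ℝ × ℝ => ψ p.1 p.2) :=
    contDiff_iff_contDiffAt.mpr fun p => by simpa using hC2ψ p.1 p.2
  have hsC2 : ContDiff ℝ 2 (fun p : ℝ × ℝ => s p.1 p.2) :=
    contDiff_iff_contDiffAt.mpr fun p => by simpa using hC2s p.1 p.2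
  obtain ⟨ψm, ψxx, hψm_t, hψm_x, hψxx⟩ := mixed_partials ψ ψt ψx hψC2 hψt hψx t x
  obtain ⟨sm, sxx, hsm_t, hsm_x, hsxx⟩ := mixed_partials s st sx hsC2 hst hsx t x
  -- x-derivative of c ∘ ψ
  have hcψx : HasDerivAt (fun y => c (ψ t y)) (c' (ψ t x) * ψx t x) x :=
    (hc' (ψ t x)).comp x (hψx t x)
  have hcψt : HasDerivAt (fun τ => c (ψ τ x)) (c' (ψ t x) * ψt t x) t :=
    (hc' (ψ t x)).comp t (hψt t x)
  have hd1 : deriv (fun y => c (ψ t y) * ψx t y) x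
      = c' (ψ t x) * ψx t x * ψx t x + c (ψ t x) * ψxx := (hcψx.mul hψxx).deriv
  have hd2 : deriv (fun y => c (ψ t y) * sx t y) x
      = c' (ψ t x) * ψx t x * sx t x + c (ψ t x) * sxx := (hcψx.mul hsxx).deriv
  have P1 := hPDE1 t x ht
  have P2 := hPDE2 t x ht
  rw [hd1] at P1
  rw [hd2] at P2
  -- time derivative building blocks
  have hs2t : HasDerivAt (fun τ => (s τ x)^2) (2 * s t x * st t x) t := by
    simpa using (hst t x).fun_pow 2
  have hc2t : HasDerivAt (fun τ => c (ψ τ x)^2)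
      (2 * c (ψ t x) * (c' (ψ t x) * ψt t x)) t := by
    simpa [mul_assoc] using hcψt.fun_pow 2
  have hψt2 : HasDerivAt (fun τ => (ψt τ x)^2) (2 * ψt t x * ψtt t x) t := by
    simpa using (hψtt t x).fun_pow 2
  have hψx2t : HasDerivAt (fun τ => (ψx τ x)^2) (2 * ψx t x * ψm) t := by
    simpa using hψm_t.fun_pow 2
  have hst2 : HasDerivAt (fun τ => (st τ x)^2) (2 * st t x * stt t x) t := by
    simpa using (hstt t x).fun_pow 2
  have hsx2t : HasDerivAt (fun τ => (sx τ x)^2) (2 * sx t x * sm) t := by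
    simpa using hsm_t.fun_pow 2
  have hWt : HasDerivAt (fun τ => W₀ (s τ x)) (W₀' (s t x) * st t x) t :=
    (hW₀ (s t x)).comp t (hst t x)
  have hE : HasDerivAt (fun τ => (1/2) * ((s τ x)^2 * ((ψt τ x)^2 + c (ψ τ x)^2 * (ψx τ x)^2)
        + (st τ x)^2 + c (ψ τ x)^2 * (sx τ x)^2) + W₀ (s τ x))
      ((1/2) * ((2 * s t x * st t x * ((ψt t x)^2 + c (ψ t x)^2 * (ψx t x)^2)
          + (s t x)^2 * (2 * ψt t x * ψtt t x
            + (2 * c (ψ t x) * (c' (ψ t x) * ψt t x) * (ψx t x)^2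
              + c (ψ t x)^2 * (2 * ψx t x * ψm))))
        + 2 * st t x * stt t x
        + (2 * c (ψ t x) * (c' (ψ t x) * ψt t x) * (sx t x)^2
          + c (ψ t x)^2 * (2 * sx t x * sm)))
        + W₀' (s t x) * st t x) t :=
    ((((hs2t.mul (hψt2.add (hc2t.mul hψx2t))).add hst2).add
      (hc2t.mul hsx2t)).const_mul (1/2)).add hWt
  have eqE : (fun τ => ℰ τ x) = (fun τ => (1/2) * ((s τ x)^2 * ((ψt τ x)^2
      + c (ψ τ x)^2 * (ψx τ x)^2) + (st τ x)^2 + c (ψ τ x)^2 * (sx τ x)^2) + W₀ (s τ x)) :=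
    funext fun τ => hℰ τ x
  rw [← eqE] at hE
  -- space derivative building blocks
  have hc2x : HasDerivAt (fun y => c (ψ t y)^2)
      (2 * c (ψ t x) * (c' (ψ t x) * ψx t x)) x := by
    simpa [mul_assoc] using hcψx.fun_pow 2
  have hs2x : HasDerivAt (fun y => (s t y)^2) (2 * s t x * sx t x) x := by
    simpa using (hsx t x).fun_pow 2
  have hF : HasDerivAt (fun y => c (ψ t y)^2 * ((s t y)^2 * ψt t y * ψx t y + st t y * sx t y))
      (2 * c (ψ t x) * (c' (ψ t x) * ψx t x)
          * ((s t x)^2 * ψt t x * ψx t x + st t x * sx t x)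
        + c (ψ t x)^2 * ((2 * s t x * sx t x * ψt t x + (s t x)^2 * ψm) * ψx t x
            + (s t x)^2 * ψt t x * ψxx
          + (sm * sx t x + st t x * sxx))) x :=
    hc2x.mul (((hs2x.mul hψm_x).mul hψxx).add (hsm_x.mul hsxx))
  have eqF : (fun y => c (ψ t y)^2 * ℱ t y)
      = (fun y => c (ψ t y)^2 * ((s t y)^2 * ψt t y * ψx t y + st t y * sx t y)) :=
    funext fun y => by rw [hℱ]
  rw [← eqF] at hF
  refine ⟨_, _, hE, hF, ?_⟩
  linear_combination ψt t x * P1 + st t x * P2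
end

section
/- With the same hypotheses and notation as the previous statement, classical solutions of the two-component nonlinear variational wave system also satisfy the momentum balance ∂_t ℱ − ∂_x(ℰ − 2W₀(s)) = 0. -/
open Set

lemma mixed_partials_s11 (f ft fx : ℝ → ℝ → ℝ)
    (hft : ∀ t x, HasDerivAt (fun τ => f τ x) (ft t x) t)
    (hfx : ∀ t x, HasDerivAt (fun y => f t y) (fx t x) x)
    (hC2 : ∀ t x, ContDiffAt ℝ 2 (fun p : ℝ × ℝ => f p.1 p.2) (t, x))
    (t x : ℝ) :
    ∃ ftx fxx : ℝ,
      HasDerivAt (fun y => ft t y) ftx x ∧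
      HasDerivAt (fun τ => fx τ x) ftx t ∧
      HasDerivAt (fun y => fx t y) fxx x := by
  set F : ℝ × ℝ → ℝ := fun p => f p.1 p.2 with hF
  have hdA : ∀ p : ℝ × ℝ, DifferentiableAt ℝ F p := fun p =>
    (hC2 p.1 p.2).differentiableAt (by norm_num)
  have hlineT : ∀ a b : ℝ, HasDerivAt (fun τ : ℝ => (τ, b)) ((1:ℝ), (0:ℝ)) a := fun a b =>
    (hasDerivAt_id a).prodMk (hasDerivAt_const a b)
  have hlineX : ∀ a b : ℝ, HasDerivAt (fun y : ℝ => (a, y)) ((0:ℝ), (1:ℝ)) b := fun a b =>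
    (hasDerivAt_const b a).prodMk (hasDerivAt_id b)
  have hft_eq : ∀ a b : ℝ, ft a b = fderiv ℝ F (a, b) (1, 0) := by
    intro a b
    have h1 : HasDerivAt (fun τ => F (τ, b)) (fderiv ℝ F (a, b) (1, 0)) a :=
      by have := (hdA (a, b)).hasFDerivAt.comp_hasDerivAt a (hlineT a b); exact this
    exact (hft a b).unique h1
  have hfx_eq : ∀ a b : ℝ, fx a b = fderiv ℝ F (a, b) (0, 1) := by
    intro a b
    have h1 : HasDerivAt (fun y => F (a, y)) (fderiv ℝ F (a, b) (0, 1)) b :=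
      by have := (hdA (a, b)).hasFDerivAt.comp_hasDerivAt b (hlineX a b); exact this
    exact (hfx a b).unique h1
  have hC1d : ContDiffAt ℝ 1 (fderiv ℝ F) (t, x) :=
    (hC2 t x).fderiv_right (by norm_num)
  have hDd : HasFDerivAt (fderiv ℝ F) (fderiv ℝ (fderiv ℝ F) (t, x)) (t, x) :=
    (hC1d.differentiableAt one_ne_zero).hasFDerivAt
  set D := fderiv ℝ (fderiv ℝ F) (t, x) with hD
  have hsymm : ∀ v w, D v w = D w v := (hC2 t x).isSymmSndFDerivAt (by norm_num)
  have hg : HasFDerivAt (fun p => fderiv ℝ F p ((0:ℝ), (1:ℝ)))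
      ((fderiv ℝ F (t, x)).comp (0 : ℝ × ℝ →L[ℝ] ℝ × ℝ) + D.flip (0, 1)) (t, x) :=
    hDd.clm_apply (hasFDerivAt_const ((0:ℝ), (1:ℝ)) (t, x))
  have hh : HasFDerivAt (fun p => fderiv ℝ F p ((1:ℝ), (0:ℝ)))
      ((fderiv ℝ F (t, x)).comp (0 : ℝ × ℝ →L[ℝ] ℝ × ℝ) + D.flip (1, 0)) (t, x) :=
    hDd.clm_apply (hasFDerivAt_const ((1:ℝ), (0:ℝ)) (t, x))
  refine ⟨D (0, 1) (1, 0), D (0, 1) (0, 1), ?_, ?_, ?_⟩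
  · have h1 : HasDerivAt (fun y => fderiv ℝ F (t, y) ((1:ℝ), (0:ℝ))) (D (0, 1) (1, 0)) x := by
      have := hh.comp_hasDerivAt x (hlineX t x)
      simpa [Function.comp_def] using this
    have e : (fun y => ft t y) = fun y => fderiv ℝ F (t, y) ((1:ℝ), (0:ℝ)) := by
      funext y; exact hft_eq t y
    rw [e]; exact h1
  · have h1 : HasDerivAt (fun τ => fderiv ℝ F (τ, x) ((0:ℝ), (1:ℝ))) (D (1, 0) (0, 1)) t := by
      have := hg.comp_hasDerivAt t (hlineT t x)
      simpa [Function.comp_def] using this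
    have e : (fun τ => fx τ x) = fun τ => fderiv ℝ F (τ, x) ((0:ℝ), (1:ℝ)) := by
      funext τ; exact hfx_eq τ x
    rw [e, hsymm (0, 1) (1, 0)]; exact h1
  · have h1 : HasDerivAt (fun y => fderiv ℝ F (t, y) ((0:ℝ), (1:ℝ))) (D (0, 1) (0, 1)) x := by
      have := hg.comp_hasDerivAt x (hlineX t x)
      simpa [Function.comp_def] using this
    have e : (fun y => fx t y) = fun y => fderiv ℝ F (t, y) ((0:ℝ), (1:ℝ)) := by
      funext y; exact hfx_eq t y
    rw [e]; exact h1

theorem momentum_balance_2NVW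
    (T : ℝ) (hT : 0 < T)
    (c c' : ℝ → ℝ) (hc : ∀ q, 0 < c q) (hc' : ∀ q, HasDerivAt c (c' q) q)
    (W₀ W₀' : ℝ → ℝ) (hW₀ : ∀ q, HasDerivAt W₀ (W₀' q) q)
    (ψ s ψt ψx ψtt st sx stt : ℝ → ℝ → ℝ)
    (hψt : ∀ t x, HasDerivAt (fun τ => ψ τ x) (ψt t x) t)
    (hψx : ∀ t x, HasDerivAt (fun y => ψ t y) (ψx t x) x)
    (hψtt : ∀ t x, HasDerivAt (fun τ => ψt τ x) (ψtt t x) t)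
    (hst : ∀ t x, HasDerivAt (fun τ => s τ x) (st t x) t)
    (hsx : ∀ t x, HasDerivAt (fun y => s t y) (sx t x) x)
    (hstt : ∀ t x, HasDerivAt (fun τ => st τ x) (stt t x) t)
    (hC2ψ : ∀ t x, ContDiffAt ℝ 2 (fun p : ℝ × ℝ => ψ p.1 p.2) (t, x))
    (hC2s : ∀ t x, ContDiffAt ℝ 2 (fun p : ℝ × ℝ => s p.1 p.2) (t, x))
    (hPDE1 : ∀ t x, t ∈ Icc 0 T →
      (s t x)^2 * (ψtt t x - c (ψ t x) * deriv (fun y => c (ψ t y) * ψx t y) x)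
        + 2 * s t x * (ψt t x * st t x - c (ψ t x)^2 * ψx t x * sx t x)
        + c (ψ t x) * c' (ψ t x) * (sx t x)^2 = 0)
    (hPDE2 : ∀ t x, t ∈ Icc 0 T →
      stt t x - c (ψ t x) * deriv (fun y => c (ψ t y) * sx t y) x
        - c (ψ t x) * c' (ψ t x) * ψx t x * sx t x
        - s t x * ((ψt t x)^2 - c (ψ t x)^2 * (ψx t x)^2) + W₀' (s t x) = 0)
    (ℰ ℱ : ℝ → ℝ → ℝ)
    (hℰ : ∀ t x, ℰ t x = (1/2) * ((s t x)^2 * ((ψt t x)^2 + c (ψ t x)^2 * (ψx t x)^2)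
        + (st t x)^2 + c (ψ t x)^2 * (sx t x)^2) + W₀ (s t x))
    (hℱ : ∀ t x, ℱ t x = (s t x)^2 * ψt t x * ψx t x + st t x * sx t x) :
    ∀ t x, t ∈ Icc 0 T →
      ∃ Ft Gx : ℝ, HasDerivAt (fun τ => ℱ τ x) Ft t ∧
        HasDerivAt (fun y => ℰ t y - 2 * W₀ (s t y)) Gx x ∧ Ft - Gx = 0 := by
  intro t x ht
  obtain ⟨ψtx, ψxx, hψtx_x, hψtx_t, hψxx⟩ := mixed_partials_s11 ψ ψt ψx hψt hψx hC2ψ t x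
  obtain ⟨stx, sxx, hstx_x, hstx_t, hsxx⟩ := mixed_partials_s11 s st sx hst hsx hC2s t x
  have hcψ : HasDerivAt (fun y => c (ψ t y)) (c' (ψ t x) * ψx t x) x :=
    (hc' (ψ t x)).comp x (hψx t x)
  have hWs : HasDerivAt (fun y => W₀ (s t y)) (W₀' (s t x) * sx t x) x :=
    (hW₀ (s t x)).comp x (hsx t x)
  have hd1 : deriv (fun y => c (ψ t y) * ψx t y) x
      = c' (ψ t x) * ψx t x * ψx t x + c (ψ t x) * ψxx :=
    (hcψ.mul hψxx).deriv
  have hd2 : deriv (fun y => c (ψ t y) * sx t y) x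
      = c' (ψ t x) * ψx t x * sx t x + c (ψ t x) * sxx :=
    (hcψ.mul hsxx).deriv
  have h1 := hPDE1 t x ht
  have h2 := hPDE2 t x ht
  rw [hd1] at h1
  rw [hd2] at h2
  have hFt : HasDerivAt (fun τ => ℱ τ x)
      (2 * s t x * st t x * ψt t x * ψx t x + (s t x)^2 * ψtt t x * ψx t x
        + (s t x)^2 * ψt t x * ψtx + stt t x * sx t x + st t x * stx) t := by
    have e : (fun τ => ℱ τ x)
        = fun τ => (s τ x)^2 * ψt τ x * ψx τ x + st τ x * sx τ x :=
      funext fun τ => hℱ τ x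
    rw [e]
    have := ((((hst t x).fun_pow 2).fun_mul (hψtt t x)).fun_mul hψtx_t).fun_add ((hstt t x).fun_mul hstx_t)
    refine this.congr_deriv ?_
    ring
  have hGx : HasDerivAt (fun y => ℰ t y - 2 * W₀ (s t y))
      (s t x * sx t x * ((ψt t x)^2 + c (ψ t x)^2 * (ψx t x)^2)
        + (s t x)^2 * (ψt t x * ψtx + c (ψ t x) * c' (ψ t x) * (ψx t x)^3
            + c (ψ t x)^2 * ψx t x * ψxx)
        + st t x * stx
        + c (ψ t x) * c' (ψ t x) * ψx t x * (sx t x)^2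
        + c (ψ t x)^2 * sx t x * sxx
        - W₀' (s t x) * sx t x) x := by
    have e : (fun y => ℰ t y - 2 * W₀ (s t y))
        = fun y => (1/2) * ((s t y)^2 * ((ψt t y)^2 + c (ψ t y)^2 * (ψx t y)^2)
            + ((st t y)^2 + c (ψ t y)^2 * (sx t y)^2)) + W₀ (s t y) - 2 * W₀ (s t y) := by
      funext y; rw [hℰ t y]; ring
    rw [e]
    have hInner := ((((hsx t x).fun_pow 2).fun_mul
        ((hψtx_x.fun_pow 2).fun_add ((hcψ.fun_pow 2).fun_mul (hψxx.fun_pow 2)))).fun_add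
        ((hstx_x.fun_pow 2).fun_add ((hcψ.fun_pow 2).fun_mul (hsxx.fun_pow 2))))
    have := ((hInner.const_mul (1/2 : ℝ)).fun_add hWs).fun_sub (hWs.const_mul 2)
    refine this.congr_deriv ?_
    push_cast
    ring
  refine ⟨_, _, hFt, hGx, ?_⟩
  linear_combination (ψx t x) * h1 + (sx t x) * h2
end

section
/- Suppose functions f₁, f₂ : [0,T] → ℝ≥0 satisfy (for p-norms of differences of two strong solutions) f(t) ≤ A + Bt + C∫₀ᵗ (t−σ)f(σ)dσ with constants A, B, C ≥ 0. Then f(t) ≤ (A + Bt)·e^{Ct²/2} for all t ∈ [0,T]. -/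
open Set Real intervalIntegral

private lemma gronwall_aux (T A B C : ℝ) (hT : 0 < T) (hA : 0 ≤ A) (hB : 0 ≤ B) (hC : 0 ≤ C)
    (g : ℝ → ℝ) (hgcont : Continuous g) (hg0 : ∀ t, 0 ≤ g t)
    (hint : ∀ t ∈ Icc 0 T, g t ≤ A + B * t + C * ∫ σ in (0:ℝ)..t, (t - σ) * g σ) :
    ∀ t ∈ Icc 0 T, g t ≤ (A + B * t) * exp (C * t ^ 2 / 2) := by
  set I : ℝ → ℝ := fun t => ∫ σ in (0:ℝ)..t, g σ with hIdef
  set J : ℝ → ℝ := fun t => ∫ σ in (0:ℝ)..t, σ * g σ with hJdef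
  have hI : ∀ t, HasDerivAt I (g t) t := fun t =>
    (hgcont.integral_hasStrictDerivAt 0 t).hasDerivAt
  have hJ : ∀ t, HasDerivAt J (t * g t) t := fun t =>
    ((continuous_id.mul hgcont).integral_hasStrictDerivAt 0 t).hasDerivAt
  set F : ℝ → ℝ := fun t => A + B * t + C * (t * I t - J t) with hFdef
  have hF : ∀ t, HasDerivAt F (B + C * I t) t := by
    intro t
    have h1 : HasDerivAt (fun t => t * I t) (1 * I t + t * g t) t :=
      (hasDerivAt_id t).mul (hI t)
    have h2 := ((hasDerivAt_const t A).add ((hasDerivAt_id t).const_mul B)).add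
      ((h1.sub (hJ t)).const_mul C)
    exact h2.congr_deriv (by ring)
  have hFrw : ∀ t ∈ Icc (0:ℝ) T, A + B * t + C * (∫ σ in (0:ℝ)..t, (t - σ) * g σ) = F t := by
    intro t ht
    have h1 : (∫ σ in (0:ℝ)..t, (t - σ) * g σ)
        = ∫ σ in (0:ℝ)..t, (t * g σ - σ * g σ) := by
      apply intervalIntegral.integral_congr
      intro σ _
      ring
    have h2 : (∫ σ in (0:ℝ)..t, (t * g σ - σ * g σ))
        = (∫ σ in (0:ℝ)..t, t * g σ) - ∫ σ in (0:ℝ)..t, σ * g σ :=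
      intervalIntegral.integral_sub ((continuous_const.mul hgcont).intervalIntegrable 0 t)
        ((continuous_id.mul hgcont).intervalIntegrable 0 t)
    have h3 : (∫ σ in (0:ℝ)..t, t * g σ) = t * I t :=
      intervalIntegral.integral_const_mul t g
    rw [h1, h2, h3, hFdef]
  have hgF : ∀ t ∈ Icc (0:ℝ) T, g t ≤ F t := by
    intro t ht
    have := hint t ht
    rwa [hFrw t ht] at this
  have hI0 : ∀ t ∈ Icc (0:ℝ) T, 0 ≤ I t := by
    intro t ht
    exact intervalIntegral.integral_nonneg ht.1 fun σ _ => hg0 σ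
  have Fmono : MonotoneOn F (Icc 0 T) := by
    apply monotoneOn_of_deriv_nonneg (convex_Icc 0 T)
    · exact fun x _ => (hF x).differentiableAt.continuousAt.continuousWithinAt
    · exact fun x _ => (hF x).differentiableAt.differentiableWithinAt
    · intro x hx
      rw [interior_Icc] at hx
      rw [(hF x).deriv]
      exact add_nonneg hB (mul_nonneg hC (hI0 x ⟨hx.1.le, hx.2.le⟩))
  have hItF : ∀ t ∈ Icc (0:ℝ) T, I t ≤ t * F t := by
    intro t ht
    have hb : (∫ σ in (0:ℝ)..t, g σ) ≤ ∫ _σ in (0:ℝ)..t, F t := by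
      apply intervalIntegral.integral_mono_on ht.1 (hgcont.intervalIntegrable 0 t)
        intervalIntegrable_const
      intro σ hσ
      have hσT : σ ∈ Icc (0:ℝ) T := ⟨hσ.1, hσ.2.trans ht.2⟩
      exact (hgF σ hσT).trans (Fmono hσT ht hσ.2)
    rwa [intervalIntegral.integral_const, sub_zero, smul_eq_mul] at hb
  set E : ℝ → ℝ := fun t => exp (-(C * t ^ 2 / 2)) with hEdef
  have hE : ∀ t, HasDerivAt E (E t * (-(C * t))) t := by
    intro t
    have hin : HasDerivAt (fun t : ℝ => -(C * t ^ 2 / 2)) (-(C * t)) t := by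
      have := (((hasDerivAt_pow 2 t).const_mul C).div_const 2).neg
      exact this.congr_deriv (by ring)
    have := hin.exp
    simpa [hEdef, mul_comm] using this
  have hE1 : ∀ t, E t ≤ 1 := fun t =>
    exp_le_one_iff.mpr (neg_nonpos.mpr (div_nonneg (mul_nonneg hC (sq_nonneg t)) two_pos.le))
  have hEpos : ∀ t, 0 < E t := fun t => exp_pos _
  set H : ℝ → ℝ := fun t => (A + B * t) - F t * E t with hHdef
  have hH : ∀ t, HasDerivAt H (B - (B + C * I t - C * (t * F t)) * E t) t := by
    intro t
    have h1 := ((hasDerivAt_const t A).add ((hasDerivAt_id t).const_mul B)).sub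
      ((hF t).mul (hE t))
    exact h1.congr_deriv (by ring)
  have Hmono : MonotoneOn H (Icc 0 T) := by
    apply monotoneOn_of_deriv_nonneg (convex_Icc 0 T)
    · exact fun x _ => (hH x).differentiableAt.continuousAt.continuousWithinAt
    · exact fun x _ => (hH x).differentiableAt.differentiableWithinAt
    · intro x hx
      rw [interior_Icc] at hx
      rw [(hH x).deriv]
      have hxT : x ∈ Icc (0:ℝ) T := ⟨hx.1.le, hx.2.le⟩
      have hbr : B + C * I x - C * (x * F x) ≤ B := by
        have := mul_le_mul_of_nonneg_left (hItF x hxT) hC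
        linarith
      rw [sub_nonneg]
      rcases le_or_gt (B + C * I x - C * (x * F x)) 0 with h | h
      · exact (mul_nonpos_of_nonpos_of_nonneg h (hEpos x).le).trans hB
      · calc (B + C * I x - C * (x * F x)) * E x
            ≤ (B + C * I x - C * (x * F x)) * 1 :=
              mul_le_mul_of_nonneg_left (hE1 x) h.le
          _ ≤ B := by linarith
  have hH0 : H 0 = 0 := by
    have hI00 : I 0 = 0 := intervalIntegral.integral_same
    have hJ00 : J 0 = 0 := intervalIntegral.integral_same
    simp [hHdef, hFdef, hEdef, hI00, hJ00]
  intro t ht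
  have hHt : 0 ≤ H t := by
    have := Hmono (left_mem_Icc.mpr hT.le) ht ht.1
    rwa [hH0] at this
  have hFE : F t * E t ≤ A + B * t := by
    have hHt' : 0 ≤ A + B * t - F t * E t := hHt
    linarith
  have hFle : F t ≤ (A + B * t) * exp (C * t ^ 2 / 2) := by
    have heq : E t = (exp (C * t ^ 2 / 2))⁻¹ := by
      rw [hEdef]; simp [Real.exp_neg]
    rw [heq] at hFE
    have hp : (0:ℝ) < exp (C * t ^ 2 / 2) := exp_pos _
    calc F t = F t * (exp (C * t ^ 2 / 2))⁻¹ * exp (C * t ^ 2 / 2) := by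
          field_simp
      _ ≤ (A + B * t) * exp (C * t ^ 2 / 2) :=
          mul_le_mul_of_nonneg_right hFE hp.le
  exact (hgF t ht).trans hFle

theorem gronwall_quadratic_kernel
    (T A B C : ℝ) (hT : 0 < T) (hA : 0 ≤ A) (hB : 0 ≤ B) (hC : 0 ≤ C)
    (f : ℝ → ℝ) (hfcont : ContinuousOn f (Icc 0 T))
    (hfnonneg : ∀ t ∈ Icc 0 T, 0 ≤ f t)
    (hint : ∀ t ∈ Icc 0 T, f t ≤ A + B * t + C * ∫ σ in (0:ℝ)..t, (t - σ) * f σ) :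
    ∀ t ∈ Icc 0 T, f t ≤ (A + B * t) * exp (C * t ^ 2 / 2) := by
  set g : ℝ → ℝ := IccExtend hT.le (fun x : Icc (0:ℝ) T => f x) with hgdef
  have hgeq : ∀ x ∈ Icc (0:ℝ) T, g x = f x := by
    intro x hx
    simp [hgdef, IccExtend_of_mem hT.le _ hx]
  have hgcont : Continuous g :=
    (continuousOn_iff_continuous_restrict.mp hfcont).Icc_extend'
  have hg0 : ∀ x, 0 ≤ g x := fun x =>
    hfnonneg _ (projIcc 0 T hT.le x).2
  have hint' : ∀ t ∈ Icc (0:ℝ) T, g t ≤ A + B * t + C * ∫ σ in (0:ℝ)..t, (t - σ) * g σ := by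
    intro t ht
    have hieq : (∫ σ in (0:ℝ)..t, (t - σ) * g σ) = ∫ σ in (0:ℝ)..t, (t - σ) * f σ := by
      apply intervalIntegral.integral_congr
      intro σ hσ
      rw [uIcc_of_le ht.1] at hσ
      show (t - σ) * g σ = (t - σ) * f σ
      rw [hgeq σ ⟨hσ.1, hσ.2.trans ht.2⟩]
    rw [hgeq t ht, hieq]
    exact hint t ht
  intro t ht
  have := gronwall_aux T A B C hT hA hB hC g hgcont hg0 hint' t ht
  rwa [hgeq t ht] at this
end
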